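/- Let λ ∈ ℤ^n be dominant, σ a permutation of {1,…,n}, and γ = σλ the corresponding extremal weight. Let H(γ) be the Gel'fand–Tsetlin pattern of type λ whose j-th row is the decreasing rearrangement of (γ_1,…,γ_j). Then r(H(γ)) = 1, where r(M) = ∏_{1≤i≤j<k≤n} [(m_{i,k}−m_{j,k−1}−i+j)!(m_{i,k−1}−m_{j+1,k}−i+j)!]/[(m_{i,k−1}−m_{j,k−1}−i+j)!(m_{i,k}−m_{j+1,k}−i+j)!]. -/

import Mathlib

/-- `λ` is dominant: `λ_1 ≥ λ_2 ≥ … ≥ λ_n` (1-indexed). -/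
def IsDominant (n : ℕ) (lam : ℕ → ℤ) : Prop :=
  ∀ i : ℕ, 1 ≤ i → i < n → lam (i + 1) ≤ lam i

/-- `M = (m_{i,j})_{1 ≤ i ≤ j ≤ n}` is a Gel'fand–Tsetlin pattern of type `λ`:
the top row is `λ` and the rows interlace:  `m_{i,j+1} ≥ m_{i,j} ≥ m_{i+1,j+1}`. -/
def IsGTPattern (n : ℕ) (lam : ℕ → ℤ) (m : ℕ → ℕ → ℤ) : Prop :=
  (∀ i : ℕ, 1 ≤ i → i ≤ n → m i n = lam i) ∧
  (∀ i j : ℕ, 1 ≤ i → i ≤ j → j + 1 ≤ n → m i j ≤ m i (j + 1) ∧ m (i + 1) (j + 1) ≤ m i j)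

/-- The `j`-th component of the weight `γ^M` of a triangular array. -/
def gtWeight (m : ℕ → ℕ → ℤ) (j : ℕ) : ℤ :=
  (∑ i ∈ Finset.Icc 1 j, m i j) - ∑ i ∈ Finset.Icc 1 (j - 1), m i (j - 1)

/-- `q(M) = Σ_{1 ≤ i ≤ j ≤ n-1} m_{i,j}`. -/
def gtQ (n : ℕ) (m : ℕ → ℕ → ℤ) : ℤ :=
  ∑ j ∈ Finset.Icc 1 (n - 1), ∑ i ∈ Finset.Icc 1 j, m i j

/-- The dual triangular array `M^∨`, with `m^∨_{i,j} = -m_{j+1-i,j}`. -/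
def gtDual (m : ℕ → ℕ → ℤ) : ℕ → ℕ → ℤ := fun i j => - m (j + 1 - i) j

/-- Factorial of an integer (arguments are nonnegative in all uses). -/
def ifact (a : ℤ) : ℚ := (Nat.factorial a.toNat : ℚ)

/-- The rational constant `r(M)`. -/
def gtR (n : ℕ) (m : ℕ → ℕ → ℤ) : ℚ :=
  ∏ k ∈ Finset.Icc 1 n, ∏ j ∈ Finset.Icc 1 (k - 1), ∏ i ∈ Finset.Icc 1 j,
    (ifact (m i k - m j (k - 1) - (i : ℤ) + (j : ℤ)) *
        ifact (m i (k - 1) - m (j + 1) k - (i : ℤ) + (j : ℤ))) /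
      (ifact (m i (k - 1) - m j (k - 1) - (i : ℤ) + (j : ℤ)) *
        ifact (m i k - m (j + 1) k - (i : ℤ) + (j : ℤ)))


/-- Inserting an element into a sorted list: split form. -/
lemma gt_split : ∀ (A : List ℤ), ∀ (B : List ℤ) (c : ℤ),
    B.Pairwise (· ≥ ·) → A.Pairwise (· ≥ ·) → B.Perm (c :: A) →
    ∃ l₁ l₂, A = l₁ ++ l₂ ∧ B = l₁ ++ c :: l₂ := by
  intro A
  induction A with
  | nil =>
      intro B c hB _ hp
      rw [List.perm_singleton] at hp
      exact ⟨[], [], rfl, hp⟩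
  | cons a0 A' ih =>
      intro B c hB hA hp
      by_cases hc : a0 ≤ c
      · have hsorted : (c :: a0 :: A').Pairwise (· ≥ ·) := by
          rw [List.pairwise_cons]
          refine ⟨?_, hA⟩
          intro b hb
          rcases List.mem_cons.mp hb with rfl | hb
          · exact hc
          · exact le_trans ((List.pairwise_cons.mp hA).1 b hb) hc
        have := List.Perm.eq_of_pairwise' hB hsorted hp
        exact ⟨[], a0 :: A', by simp, this⟩
      · push_neg at hc
        obtain ⟨b0, B', rfl⟩ : ∃ b0 B', B = b0 :: B' := by
          cases B with
          | nil => simpa using hp.length_eq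
          | cons x xs => exact ⟨x, xs, rfl⟩
        have ha0B : a0 ∈ b0 :: B' := hp.mem_iff.mpr (by simp)
        have hb0 : b0 = a0 := by
          have hb0mem : b0 ∈ c :: a0 :: A' := hp.mem_iff.mp (by simp)
          have hge : a0 ≤ b0 := by
            rcases List.mem_cons.mp ha0B with h1 | h1
            · exact le_of_eq h1
            · exact (List.pairwise_cons.mp hB).1 a0 h1
          rcases List.mem_cons.mp hb0mem with h1 | h1
          · exact absurd (h1 ▸ hge) (not_le.mpr hc)
          · rcases List.mem_cons.mp h1 with h2 | h2
            · exact h2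
            · exact le_antisymm ((List.pairwise_cons.mp hA).1 b0 h2) hge
        have hperm' : B'.Perm (c :: A') := by
          have h1 : (b0 :: B').Perm (a0 :: c :: A') :=
            hp.trans (List.Perm.swap a0 c A')
          rw [hb0] at h1
          exact h1.cons_inv
        obtain ⟨l₁, l₂, h1, h2⟩ := ih B' c (List.pairwise_cons.mp hB).2
          (List.pairwise_cons.mp hA).2 hperm'
        exact ⟨a0 :: l₁, l₂, by rw [h1]; rfl, by rw [h2, hb0]; rfl⟩

lemma gt_sorted_map (f : ℕ → ℤ) (len : ℕ)
    (hf : ∀ i, 1 ≤ i → i < len → f (i + 1) ≤ f i) :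
    ((List.range' 1 len).map f).Pairwise (· ≥ ·) := by
  rw [← List.isChain_iff_pairwise, List.isChain_iff_getElem]
  intro i hi
  simp only [List.get_eq_getElem, List.getElem_map, List.getElem_range'_1]
  simp only [List.length_map, List.length_range'] at hi
  have := hf (1 + i) (by omega) (by omega)
  have e : 1 + (i + 1) = 1 + i + 1 := by omega
  rw [e]
  exact this

/-- Main step: relation between consecutive sorted rows. -/
lemma gt_row_step (m : ℕ) (a b : ℕ → ℤ) (c : ℤ)
    (hsa : ∀ i, 1 ≤ i → i < m → a (i + 1) ≤ a i)
    (hsb : ∀ i, 1 ≤ i → i < m + 1 → b (i + 1) ≤ b i)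
    (hperm : ((List.range' 1 (m + 1)).map b).Perm (c :: (List.range' 1 m).map a)) :
    ∃ t, 1 ≤ t ∧ t ≤ m + 1 ∧ (∀ i, 1 ≤ i → i < t → b i = a i) ∧
      (∀ j, t ≤ j → j ≤ m → a j = b (j + 1)) := by
  obtain ⟨l₁, l₂, hA, hB⟩ := gt_split _ _ c (gt_sorted_map b (m + 1) hsb)
    (gt_sorted_map a m hsa) hperm
  have hAlen : l₁.length + l₂.length = m := by
    have := congrArg List.length hA
    simpa using this.symm
  refine ⟨l₁.length + 1, by omega, by omega, ?_, ?_⟩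
  · intro i hi hit
    have key : ((List.range' 1 (m + 1)).map b)[i - 1]? = ((List.range' 1 m).map a)[i - 1]? := by
      rw [hB, hA, List.getElem?_append_left (by omega : i - 1 < l₁.length),
        List.getElem?_append_left (by omega : i - 1 < l₁.length)]
    rw [List.getElem?_map, List.getElem?_map, List.getElem?_range' (by omega),
      List.getElem?_range' (by omega), Option.map_some, Option.map_some] at key
    have key2 := Option.some.inj key
    have e : 1 + 1 * (i - 1) = i := by omega
    rw [e] at key2
    exact key2
  · intro j hjt hjm
    have key : ((List.range' 1 (m + 1)).map b)[j]? = ((List.range' 1 m).map a)[j - 1]? := by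
      rw [hB, hA, List.getElem?_append_right (by omega : l₁.length ≤ j),
        List.getElem?_append_right (by omega : l₁.length ≤ j - 1)]
      have e : j - l₁.length = (j - 1 - l₁.length) + 1 := by omega
      rw [e, List.getElem?_cons_succ]
    rw [List.getElem?_map, List.getElem?_map, List.getElem?_range' (by omega),
      List.getElem?_range' (by omega), Option.map_some, Option.map_some] at key
    have key2 := Option.some.inj key
    have e1 : 1 + 1 * j = j + 1 := by omega
    have e2 : 1 + 1 * (j - 1) = j := by omega
    rw [e1, e2] at key2
    exact key2.symm

lemma gt_ifact_ne_zero (a : ℤ) : ifact a ≠ 0 := by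
  simp [ifact, Nat.factorial_ne_zero]

/-- `r(H(γ)) = 1` for an extremal weight `γ = σλ` of the dominant weight `λ`, where `H(γ)`
is the Gel'fand–Tsetlin pattern of type `λ` whose `j`-th row is the decreasing
rearrangement of `(γ_1, …, γ_j)`. -/
theorem statement3 (n : ℕ) (hn : 1 ≤ n) (lam γ : ℕ → ℤ) (hdom : IsDominant n lam)
    (hperm : (Finset.Icc 1 n).val.map γ = (Finset.Icc 1 n).val.map lam)
    (h : ℕ → ℕ → ℤ)
    (hrow : ∀ j : ℕ, 1 ≤ j → j ≤ n →
      ((Finset.Icc 1 j).val.map (fun i => h i j) = (Finset.Icc 1 j).val.map γ) ∧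
      ∀ i : ℕ, 1 ≤ i → i < j → h (i + 1) j ≤ h i j) :
    gtR n h = 1 := by
  unfold gtR
  apply Finset.prod_eq_one
  intro k hk
  apply Finset.prod_eq_one
  intro j hj
  apply Finset.prod_eq_one
  intro i hi
  simp only [Finset.mem_Icc] at hk hj hi
  have hk2 : 2 ≤ k := by omega
  obtain ⟨m, rfl⟩ : ∃ m, k = m + 1 := ⟨k - 1, by omega⟩
  simp only [Nat.add_sub_cancel] at hj ⊢
  have hm1 : 1 ≤ m := by omega
  obtain ⟨hb1, hb2⟩ := hrow (m + 1) (by omega) hk.2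
  obtain ⟨ha1, ha2⟩ := hrow m hm1 (by omega)
  -- multiset step
  have c1 : ((List.range' 1 (m + 1)).map (fun i => h i (m + 1)) : Multiset ℤ)
      = (Finset.Icc 1 (m + 1)).val.map (fun i => h i (m + 1)) := rfl
  have c2 : ((List.range' 1 (m + 1)).map γ : Multiset ℤ)
      = (Finset.Icc 1 (m + 1)).val.map γ := rfl
  have c3 : ((List.range' 1 m).map (fun i => h i m) : Multiset ℤ)
      = (Finset.Icc 1 m).val.map (fun i => h i m) := rfl
  have c4 : ((List.range' 1 m).map γ : Multiset ℤ)
      = (Finset.Icc 1 m).val.map γ := rfl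
  have hla : ((List.range' 1 m).map (fun i => h i m) : Multiset ℤ)
      = ((List.range' 1 m).map γ : Multiset ℤ) := by rw [c3, c4, ha1]
  have hstep : ((List.range' 1 (m + 1)).map (fun i => h i (m + 1)) : Multiset ℤ)
      = ↑(γ (m + 1) :: (List.range' 1 m).map (fun i => h i m)) := by
    rw [c1, hb1, ← c2, ← Multiset.cons_coe, hla]
    rw [List.range'_concat, List.map_append]
    have e : 1 + 1 * m = m + 1 := by omega
    rw [e]
    exact Multiset.coe_eq_coe.mpr (List.perm_append_singleton _ _)
  have hperm' := Multiset.coe_eq_coe.mp hstep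
  obtain ⟨t, ht1, ht2, htb, hta⟩ :=
    gt_row_step m (fun i => h i m) (fun i => h i (m + 1)) (γ (m + 1)) ha2 hb2 hperm'
  by_cases hit : i < t
  · have hik : h i (m + 1) = h i m := htb i hi.1 hit
    rw [hik]
    exact div_self (mul_ne_zero (gt_ifact_ne_zero _) (gt_ifact_ne_zero _))
  · have hjk : h j m = h (j + 1) (m + 1) := hta j (by omega) hj.2
    rw [hjk, mul_comm]
    exact div_self (mul_ne_zero (gt_ifact_ne_zero _) (gt_ifact_ne_zero _))
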